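/- (Perron) A real symmetric matrix with all entries strictly positive has a largest eigenvalue whose corresponding eigenvector can be chosen with all entries strictly positive. -/

import Mathlib

open Matrix

open Metric Module.End RealInnerProductSpace

/-- (Perron) A real symmetric matrix with all entries strictly positive has a largest
eigenvalue `λ > 0` whose eigenvector can be chosen with all entries strictly positive. -/
theorem perron_symmetric_positive_matrix {n : ℕ} (hn : 0 < n)
    (R : Matrix (Fin n) (Fin n) ℝ) (hRsymm : R.IsSymm) (hRpos : ∀ i j, 0 < R i j) :
    ∃ lam : ℝ, 0 < lam ∧ ∃ v : Fin n → ℝ, (∀ i, 0 < v i) ∧ R.mulVec v = lam • v ∧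
      ∀ (μ : ℝ) (w : Fin n → ℝ), w ≠ 0 → R.mulVec w = μ • w → μ ≤ lam := by
  haveI : Nonempty (Fin n) := ⟨⟨0, hn⟩⟩
  let T0 : EuclideanSpace ℝ (Fin n) →ₗ[ℝ] EuclideanSpace ℝ (Fin n) :=
    { toFun := fun x => WithLp.toLp 2 (R.mulVec x)
      map_add' := fun x y => by simp [Matrix.mulVec_add]
      map_smul' := fun c x => by simp [Matrix.mulVec_smul] }
  let T : EuclideanSpace ℝ (Fin n) →L[ℝ] EuclideanSpace ℝ (Fin n) :=
    LinearMap.toContinuousLinearMap T0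
  have hTapp : ∀ x : EuclideanSpace ℝ (Fin n), T x = R.mulVec x := fun x => rfl
  have hinner : ∀ x y : EuclideanSpace ℝ (Fin n), ⟪x, y⟫ = ∑ i, x i * y i := by
    intro x y
    simp [PiLp.inner_apply, RCLike.inner_apply, mul_comm]
  have hf : ∀ x : EuclideanSpace ℝ (Fin n),
      T.reApplyInnerSelf x = ∑ i, (∑ j, R i j * x j) * x i := by
    intro x
    rw [ContinuousLinearMap.reApplyInnerSelf_apply]
    simp [PiLp.inner_apply, RCLike.inner_apply, hTapp, Matrix.mulVec, dotProduct, mul_comm]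
  have hsym : IsSelfAdjoint T := by
    rw [ContinuousLinearMap.isSelfAdjoint_iff_isSymmetric]
    intro x y
    show ⟪T x, y⟫ = ⟪x, T y⟫
    rw [hinner, hinner, hTapp, hTapp]
    simp only [Matrix.mulVec, dotProduct]
    calc ∑ i, (∑ j, R i j * x j) * y i = ∑ i, ∑ j, R i j * x j * y i := by
          simp [Finset.sum_mul]
      _ = ∑ j, ∑ i, R i j * x j * y i := Finset.sum_comm
      _ = ∑ i, x i * ∑ j, R i j * y j := by
          refine Finset.sum_congr rfl fun i _ => ?_
          rw [Finset.mul_sum]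
          refine Finset.sum_congr rfl fun j _ => ?_
          rw [hRsymm.apply j i]
          ring
  have hf2 : ∀ x : EuclideanSpace ℝ (Fin n),
      T.reApplyInnerSelf x = ∑ i, ∑ j, R i j * x j * x i := by
    intro x; rw [hf]; simp [Finset.sum_mul]
  obtain ⟨x₀, hx₀mem, hmax⟩ := (isCompact_sphere (0 : EuclideanSpace ℝ (Fin n)) 1).exists_isMaxOn
    (NormedSpace.sphere_nonempty.mpr zero_le_one)
    T.reApplyInnerSelf_continuous.continuousOn
  have hx₀norm : ‖x₀‖ = 1 := mem_sphere_zero_iff_norm.mp hx₀mem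
  have hx₀ne : x₀ ≠ 0 := by
    intro h; rw [h, norm_zero] at hx₀norm; exact one_ne_zero hx₀norm.symm
  set v0 : EuclideanSpace ℝ (Fin n) := WithLp.toLp 2 (fun i => |x₀ i|) with hv0def
  have hv0nonneg : ∀ i, 0 ≤ v0 i := fun i => abs_nonneg _
  have hv0norm : ‖v0‖ = 1 := by
    rw [EuclideanSpace.norm_eq] at hx₀norm ⊢
    simpa [hv0def, Real.norm_eq_abs, abs_abs] using hx₀norm
  have hv0ne : v0 ≠ 0 := by
    intro h; rw [h, norm_zero] at hv0norm; exact one_ne_zero hv0norm.symm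
  have hfle : T.reApplyInnerSelf x₀ ≤ T.reApplyInnerSelf v0 := by
    rw [hf2, hf2]
    refine Finset.sum_le_sum fun i _ => Finset.sum_le_sum fun j _ => ?_
    have habs : |R i j * x₀ j * x₀ i| = R i j * v0 j * v0 i := by
      rw [abs_mul, abs_mul, abs_of_pos (hRpos i j)]
    calc R i j * x₀ j * x₀ i ≤ |R i j * x₀ j * x₀ i| := le_abs_self _
      _ = R i j * v0 j * v0 i := habs
  have hmax' : IsMaxOn T.reApplyInnerSelf (sphere (0 : EuclideanSpace ℝ (Fin n)) 1) v0 := by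
    intro y hy
    exact le_trans (hmax hy) hfle
  have hv0mem : v0 ∈ sphere (0 : EuclideanSpace ℝ (Fin n)) 1 :=
    mem_sphere_zero_iff_norm.mpr hv0norm
  have hextr : IsLocalExtrOn T.reApplyInnerSelf
      (sphere (0 : EuclideanSpace ℝ (Fin n)) ‖v0‖) v0 := by
    rw [hv0norm]; exact Or.inr hmax'.localize
  have heig := hsym.hasEigenvector_of_isLocalExtrOn hv0ne hextr
  set lam : ℝ := T.rayleighQuotient v0 with hlamdef
  have hlam_eq : lam = T.reApplyInnerSelf v0 := by
    rw [hlamdef, ContinuousLinearMap.rayleighQuotient, hv0norm]; norm_num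
  have hTv0 : T v0 = lam • v0 := mem_eigenspace_iff.mp heig.1
  have hmul : R.mulVec v0 = lam • (v0 : Fin n → ℝ) := by
    have := congrArg WithLp.ofLp hTv0; rw [← hTapp]; simpa using this
  obtain ⟨k, hk⟩ := Function.ne_iff.mp (show x₀.ofLp ≠ 0 from fun h => hx₀ne (by simpa using h))
  have hv0k : 0 < v0 k := abs_pos.mpr hk
  have hlam_pos : 0 < lam := by
    rw [hlam_eq, hf2]
    refine Finset.sum_pos' (fun i _ => Finset.sum_nonneg fun j _ =>
      mul_nonneg (mul_nonneg (hRpos i j).le (hv0nonneg j)) (hv0nonneg i))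
      ⟨k, Finset.mem_univ k, Finset.sum_pos'
        (fun j _ => mul_nonneg (mul_nonneg (hRpos k j).le (hv0nonneg j)) (hv0nonneg k))
        ⟨k, Finset.mem_univ k, mul_pos (mul_pos (hRpos k k) hv0k) hv0k⟩⟩
  refine ⟨lam, hlam_pos, v0, ?_, hmul, ?_⟩
  · intro i
    have happ : lam * v0 i = ∑ j, R i j * v0 j := by
      have := congrFun hmul i
      simp [Matrix.mulVec, dotProduct] at this
      rw [← this]
    have hpos : 0 < lam * v0 i := by
      rw [happ]
      exact Finset.sum_pos' (fun j _ => mul_nonneg (hRpos i j).le (hv0nonneg j))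
        ⟨k, Finset.mem_univ k, mul_pos (hRpos i k) hv0k⟩
    rcases (hv0nonneg i).lt_or_eq with h | h
    · exact h
    · rw [← h, mul_zero] at hpos; exact absurd hpos (lt_irrefl 0)
  · intro μ w hw hmw
    set u : EuclideanSpace ℝ (Fin n) := WithLp.toLp 2 w with hudef
    have hu0 : u ≠ 0 := by
        intro h; apply hw; simpa [hudef] using congrArg WithLp.ofLp h
    have hnorm : (0 : ℝ) < ‖u‖ := norm_pos_iff.mpr hu0
    have hTu : T u = μ • u := by
        apply WithLp.ofLp_injective; rw [hTapp]; simpa [hudef] using hmw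
    have hfu : T.reApplyInnerSelf u = μ * ‖u‖ ^ 2 := by
      rw [ContinuousLinearMap.reApplyInnerSelf_apply, hTu, real_inner_smul_left,
        real_inner_self_eq_norm_sq]
      simp
    have hmem : (‖u‖⁻¹ • u) ∈ sphere (0 : EuclideanSpace ℝ (Fin n)) 1 := by
      rw [mem_sphere_zero_iff_norm, norm_smul, norm_inv, norm_norm,
        inv_mul_cancel₀ (ne_of_gt hnorm)]
    have hle : T.reApplyInnerSelf (‖u‖⁻¹ • u) ≤ T.reApplyInnerSelf v0 := hmax' hmem
    rw [ContinuousLinearMap.reApplyInnerSelf_smul, hfu, ← hlam_eq] at hle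
    have : ‖(‖u‖⁻¹ : ℝ)‖ ^ 2 * (μ * ‖u‖ ^ 2) = μ := by
      rw [norm_inv, norm_norm]
      field_simp
    rw [this] at hle
    exact hle
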